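/- arXiv:0806.3433 — 2 statements merged into one kernel-verified Lean document; each statement's English description precedes it below -/
import Mathlib

section
/- Let S be a set of eight pairwise distinct vectors of 𝔽_2^4. Then the elements of S sum to zero if and only if S is the disjoint union of two affine planes of 𝔽_2^4, i.e., S = (a + W) ∪ (a' + W') for cosets of 2-dimensional linear subspaces W, W' with (a + W) ∩ (a' + W') = ∅. -/
abbrev V2 : Type := Fin 4 → ZMod 2

lemma vadd_self (x : V2) : x + x = 0 := by
  funext i; exact CharTwo.add_self_eq_zero _

lemma veq_of_add_eq_zero {x y : V2} (h : x + y = 0) : x = y := by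
  have := congrArg (· + y) h
  simpa [add_assoc, vadd_self] using this

lemma vne_add {x y : V2} (h : x ≠ y) : x + y ≠ 0 := fun h0 => h (veq_of_add_eq_zero h0)

lemma zmod2_cases : ∀ c : ZMod 2, c = 0 ∨ c = 1 := by decide

lemma sum_four_distinct {x y z w : V2} (hxy : x ≠ y) (hxz : x ≠ z) (hxw : x ≠ w)
    (hyz : y ≠ z) (hyw : y ≠ w) (hzw : z ≠ w) :
    ∑ t ∈ ({x, y, z, w} : Finset V2), t = x + y + z + w := by
  rw [Finset.sum_insert (by simp [hxy, hxz, hxw]), Finset.sum_insert (by simp [hyz, hyw]),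
    Finset.sum_insert (by simp [hzw]), Finset.sum_singleton]
  ring

lemma card_four_distinct {x y z w : V2} (hxy : x ≠ y) (hxz : x ≠ z) (hxw : x ≠ w)
    (hyz : y ≠ z) (hyw : y ≠ w) (hzw : z ≠ w) :
    ({x, y, z, w} : Finset V2).card = 4 := by
  rw [Finset.card_insert_of_notMem (by simp [hxy, hxz, hxw]),
    Finset.card_insert_of_notMem (by simp [hyz, hyw]),
    Finset.card_insert_of_notMem (by simp [hzw]), Finset.card_singleton]

lemma finset_card_eq_four {s : Finset V2} (h : s.card = 4) :
    ∃ a b c d : V2, a ≠ b ∧ a ≠ c ∧ a ≠ d ∧ b ≠ c ∧ b ≠ d ∧ c ≠ d ∧ s = {a, b, c, d} := by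
  obtain ⟨a, t, hat, rfl, ht⟩ := Finset.card_eq_succ.mp h
  obtain ⟨b, c, d, hbc, hbd, hcd, rfl⟩ := Finset.card_eq_three.mp ht
  simp only [Finset.mem_insert, Finset.mem_singleton, not_or] at hat
  exact ⟨a, b, c, d, hat.1, hat.2.1, hat.2.2, hbc, hbd, hcd, rfl⟩

lemma plane_of_four (p q r s : V2) (hpq : p ≠ q) (hpr : p ≠ r) (hqr : q ≠ r)
    (hsum : p + q + r + s = 0) :
    ∃ W : Submodule (ZMod 2) V2, Module.finrank (ZMod 2) W = 2 ∧
      (p + ·) '' (W : Set V2) = {p, q, r, s} := by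
  have hs : p + q + r = s := veq_of_add_eq_zero hsum
  set u : V2 := p + q with hu
  set v : V2 := p + r with hv
  have hu0 : u ≠ 0 := vne_add hpq
  have hv0 : v ≠ 0 := vne_add hpr
  have huvne : u ≠ v := fun h => hqr (by
    have := congrArg (p + ·) h
    simpa [hu, hv, ← add_assoc, vadd_self] using this)
  have keyq : p + u = q := by rw [hu, ← add_assoc, vadd_self, zero_add]
  have keyr : p + v = r := by rw [hv, ← add_assoc, vadd_self, zero_add]
  have keys : p + (u + v) = s := by
    have h2 : p + (u + v) = (p + p) + (p + q + r) := by rw [hu, hv]; ring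
    rw [h2, vadd_self, zero_add, hs]
  refine ⟨Submodule.span (ZMod 2) {u, v}, ?_, ?_⟩
  · have hli : LinearIndependent (ZMod 2) ![u, v] := by
      rw [LinearIndependent.pair_iff' hu0]
      intro c
      rcases zmod2_cases c with h | h <;> subst h
      · simpa using fun h => hv0 h.symm
      · simpa using huvne
    have hr := finrank_span_eq_card hli
    have hrange : Set.range ![u, v] = {u, v} := by
      ext x
      simp [Matrix.range_cons, Matrix.range_empty]
      tauto
    rw [hrange] at hr
    simpa using hr
  · ext t
    constructor
    · rintro ⟨x, hx, rfl⟩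
      rw [SetLike.mem_coe, Submodule.mem_span_pair] at hx
      obtain ⟨c, d, rfl⟩ := hx
      rcases zmod2_cases c with h | h <;> subst h <;>
        rcases zmod2_cases d with h | h <;> subst h <;> simp only [zero_smul, one_smul,
          zero_add, add_zero]
      · left; simp
      · right; right; left; exact keyr
      · right; left; exact keyq
      · right; right; right; rw [keys]; rfl
    · have hum : u ∈ Submodule.span (ZMod 2) ({u, v} : Set V2) :=
        Submodule.subset_span (by simp)
      have hvm : v ∈ Submodule.span (ZMod 2) ({u, v} : Set V2) :=
        Submodule.subset_span (by simp)
      rintro (rfl | rfl | rfl | h)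
      · exact ⟨0, Submodule.zero_mem _, by simp⟩
      · exact ⟨u, hum, keyq⟩
      · exact ⟨v, hvm, keyr⟩
      · simp only [Set.mem_singleton_iff] at h
        exact ⟨u + v, add_mem hum hvm, by simp only []; rw [keys, h]⟩

lemma coset_explicit (W : Submodule (ZMod 2) V2) (h : Module.finrank (ZMod 2) W = 2) :
    ∃ u v : V2, u ≠ 0 ∧ v ≠ 0 ∧ u ≠ v ∧ (W : Set V2) = {0, u, v, u + v} := by
  let b : Module.Basis (Fin 2) (ZMod 2) W := Module.finBasisOfFinrankEq (ZMod 2) W h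
  refine ⟨(b 0 : V2), (b 1 : V2), ?_, ?_, ?_, ?_⟩
  · simpa using b.ne_zero 0
  · simpa using b.ne_zero 1
  · intro hh
    exact (by decide : (0 : Fin 2) ≠ 1) (b.injective (Subtype.coe_injective hh))
  · ext x
    constructor
    · intro hx
      have hrep := b.sum_repr ⟨x, hx⟩
      rw [Fin.sum_univ_two] at hrep
      have hx2 : x = b.repr ⟨x, hx⟩ 0 • (b 0 : V2) + b.repr ⟨x, hx⟩ 1 • (b 1 : V2) := by
        have := congrArg (Subtype.val) hrep
        simpa using this.symm
      rcases zmod2_cases (b.repr ⟨x, hx⟩ 0) with h0 | h0 <;>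
        rcases zmod2_cases (b.repr ⟨x, hx⟩ 1) with h1 | h1 <;>
          rw [h0, h1] at hx2 <;> simp only [zero_smul, one_smul, zero_add, add_zero] at hx2 <;>
          subst hx2
      · left; rfl
      · right; right; left; rfl
      · right; left; rfl
      · right; right; right; rfl
    · rintro (rfl | rfl | rfl | hx)
      · exact W.zero_mem
      · exact (b 0).2
      · exact (b 1).2
      · simp only [Set.mem_singleton_iff] at hx
        subst hx
        exact add_mem (b 0).2 (b 1).2

lemma sum4 (a u v : V2) (hu : u ≠ 0) (hv : v ≠ 0) (huv : u ≠ v) :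
    ∑ x ∈ ({a, a + u, a + v, a + u + v} : Finset V2), x = 0 := by
  have huv0 : u + v ≠ 0 := vne_add huv
  have h1 : a ≠ a + u := by simp [left_eq_add, hu]
  have h2 : a ≠ a + v := by simp [left_eq_add, hv]
  have h3 : a ≠ a + u + v := by
    rw [add_assoc]; simp [left_eq_add, huv0]
  have h4 : a + u ≠ a + v := by simp [huv]
  have h5 : a + u ≠ a + u + v := by simp [left_eq_add, hv]
  have h6 : a + v ≠ a + u + v := by
    rw [add_assoc]
    simp only [ne_eq, add_right_inj]
    intro h; exact hu (by simpa [right_eq_add] using h)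
  rw [sum_four_distinct h1 h2 h3 h4 h5 h6]
  have : a + (a + u) + (a + v) + (a + u + v) = (a + a) + (a + a) + (u + u) + (v + v) := by ring
  rw [this, vadd_self, vadd_self, vadd_self, vadd_self]; simp

lemma exists_four (S : Finset V2) (hcard : S.card = 8) :
    ∃ x y z w : V2, x ∈ S ∧ y ∈ S ∧ z ∈ S ∧ w ∈ S ∧
      x ≠ y ∧ x ≠ z ∧ x ≠ w ∧ y ≠ z ∧ y ≠ w ∧ z ≠ w ∧ x + y + z + w = 0 := by
  have hVcard : (Finset.univ : Finset V2).card = 16 := by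
    simp [Finset.card_univ]
  have hA : S.offDiag.card = 56 := by rw [Finset.offDiag_card, hcard]
  have hmaps : ∀ p ∈ S.offDiag, (fun q : V2 × V2 => q.1 + q.2) p ∈ (Finset.univ : Finset V2) :=
    fun p _ => Finset.mem_univ _
  have hlt : (Finset.univ : Finset V2).card * 2 < S.offDiag.card := by
    rw [hVcard, hA]; norm_num
  obtain ⟨b, -, hb⟩ := Finset.exists_lt_card_fiber_of_mul_lt_card_of_maps_to hmaps hlt
  set F := S.offDiag.filter (fun q : V2 × V2 => q.1 + q.2 = b) with hF
  obtain ⟨⟨x, y⟩, hxyF⟩ : F.Nonempty := Finset.card_pos.mp (by omega)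
  have hpair : ({(x, y), (y, x)} : Finset (V2 × V2)).card ≤ 2 :=
    (Finset.card_insert_le _ _).trans (by simp)
  have hne : (F \ {(x, y), (y, x)}).Nonempty := by
    rw [← Finset.card_pos]
    have := Finset.le_card_sdiff ({(x, y), (y, x)} : Finset (V2 × V2)) F
    omega
  obtain ⟨⟨z, w⟩, hzwF⟩ := hne
  rw [Finset.mem_sdiff] at hzwF
  obtain ⟨hzwF, hzwP⟩ := hzwF
  simp only [Finset.mem_insert, Finset.mem_singleton, Prod.mk.injEq, not_or, not_and] at hzwP
  rw [hF, Finset.mem_filter, Finset.mem_offDiag] at hxyF hzwF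
  obtain ⟨⟨hxS, hyS, hxy⟩, hxyb⟩ := hxyF
  obtain ⟨⟨hzS, hwS, hzw⟩, hzwb⟩ := hzwF
  have hsums : x + y = z + w := by rw [hxyb, hzwb]
  have hxz : x ≠ z := by
    rintro rfl
    exact hzwP.1 rfl (add_left_cancel hsums).symm
  have hyz : y ≠ z := by
    rintro rfl
    have : w = x := by
      have : y + x = y + w := by rwa [add_comm x y] at hsums
      exact (add_left_cancel this).symm
    exact hzwP.2 rfl this
  have hxw : x ≠ w := by
    rintro rfl
    have : z = y := by
      have : x + y = x + z := by rwa [add_comm z x] at hsums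
      exact (add_left_cancel this).symm
    exact hzwP.2 this rfl
  have hyw : y ≠ w := by
    rintro rfl
    have : z = x := add_right_cancel hsums.symm
    exact hzwP.1 this rfl
  refine ⟨x, y, z, w, hxS, hyS, hzS, hwS, hxy, hxz, hxw, hyz, hyw, hzw, ?_⟩
  have : x + y + z + w = (x + y) + (z + w) := by ring
  rw [this, hsums, vadd_self]

/-- A set of eight pairwise distinct vectors of 𝔽₂⁴ sums to zero
iff it is the disjoint union of two affine planes (cosets of 2-dimensional
linear subspaces) of 𝔽₂⁴. -/
theorem stmt_14 (S : Finset (Fin 4 → ZMod 2)) (hcard : S.card = 8) :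
    (∑ x ∈ S, x) = 0 ↔
    ∃ (W W' : Submodule (ZMod 2) (Fin 4 → ZMod 2)) (a a' : Fin 4 → ZMod 2),
      Module.finrank (ZMod 2) W = 2 ∧ Module.finrank (ZMod 2) W' = 2 ∧
      (S : Set (Fin 4 → ZMod 2)) =
        ((a + ·) '' (W : Set (Fin 4 → ZMod 2))) ∪
          ((a' + ·) '' (W' : Set (Fin 4 → ZMod 2))) ∧
      Disjoint ((a + ·) '' (W : Set (Fin 4 → ZMod 2)))
        ((a' + ·) '' (W' : Set (Fin 4 → ZMod 2))) := by
  constructor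
  · intro hsum
    obtain ⟨x, y, z, w, hxS, hyS, hzS, hwS, hxy, hxz, hxw, hyz, hyw, hzw, hsum4⟩ :=
      exists_four S hcard
    set T : Finset V2 := {x, y, z, w} with hT
    have hTsub : T ⊆ S := by
      rw [hT]
      intro t ht
      simp only [Finset.mem_insert, Finset.mem_singleton] at ht
      rcases ht with rfl | rfl | rfl | rfl <;> assumption
    have hTcard : T.card = 4 := card_four_distinct hxy hxz hxw hyz hyw hzw
    have hTsum : ∑ t ∈ T, t = 0 := by
      rw [hT, sum_four_distinct hxy hxz hxw hyz hyw hzw, hsum4]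
    have hRcard : (S \ T).card = 4 := by
      rw [Finset.card_sdiff_of_subset hTsub, hcard, hTcard]
    have hRsum : ∑ t ∈ S \ T, t = 0 := by
      have := Finset.sum_sdiff (f := fun t : V2 => t) hTsub
      rw [hTsum, add_zero, hsum] at this
      exact this
    obtain ⟨p, q, r, s, hpq, hpr, hps, hqr, hqs, hrs, hR⟩ := finset_card_eq_four hRcard
    have hRsum4 : p + q + r + s = 0 := by
      rw [hR, sum_four_distinct hpq hpr hps hqr hqs hrs] at hRsum
      exact hRsum
    obtain ⟨W, hWrk, hWim⟩ := plane_of_four x y z w hxy hxz hyz hsum4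
    obtain ⟨W', hWrk', hWim'⟩ := plane_of_four p q r s hpq hpr hqr hRsum4
    refine ⟨W, W', x, p, hWrk, hWrk', ?_, ?_⟩
    · rw [hWim, hWim']
      have h1 : ({x, y, z, w} : Set V2) = ↑T := by rw [hT]; simp
      have h2 : ({p, q, r, s} : Set V2) = ↑(S \ T) := by rw [hR]; simp
      rw [h1, h2, ← Finset.coe_union, Finset.union_sdiff_of_subset hTsub]
    · rw [hWim, hWim']
      have h1 : ({x, y, z, w} : Set V2) = ↑T := by rw [hT]; simp
      have h2 : ({p, q, r, s} : Set V2) = ↑(S \ T) := by rw [hR]; simp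
      rw [h1, h2, Finset.disjoint_coe]
      exact Finset.disjoint_sdiff
  · rintro ⟨W, W', a, a', hWrk, hWrk', hSet, hDisj⟩
    obtain ⟨u, v, hu0, hv0, huv, hWset⟩ := coset_explicit W hWrk
    obtain ⟨u', v', hu0', hv0', huv', hWset'⟩ := coset_explicit W' hWrk'
    have him : (a + ·) '' (W : Set V2) = ↑({a, a + u, a + v, a + u + v} : Finset V2) := by
      rw [hWset]
      simp [Set.image_insert_eq, add_assoc]
    have him' : (a' + ·) '' (W' : Set V2) =
        ↑({a', a' + u', a' + v', a' + u' + v'} : Finset V2) := by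
      rw [hWset']
      simp [Set.image_insert_eq, add_assoc]
    rw [him, him'] at hSet hDisj
    rw [← Finset.coe_union] at hSet
    have hSeq : S = ({a, a + u, a + v, a + u + v} : Finset V2) ∪
        ({a', a' + u', a' + v', a' + u' + v'} : Finset V2) := Finset.coe_injective hSet
    rw [Finset.disjoint_coe] at hDisj
    rw [hSeq, Finset.sum_union hDisj, sum4 a u v hu0 hv0 huv,
      sum4 a' u' v' hu0' hv0' huv', add_zero]
end

section
/- Let S be a set of eight pairwise distinct vectors of 𝔽_2^5. Then the elements of S sum to zero if and only if S is the disjoint union of two affine planes of 𝔽_2^5, i.e., S = (a + W) ∪ (a' + W') for cosets of 2-dimensional linear subspaces W, W' with (a + W) ∩ (a' + W') = ∅. -/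
section Helpers

variable {M : Type*} [AddCommGroup M] [Module (ZMod 2) M]

lemma zmod2_add_self (x : M) : x + x = 0 := by
  rw [← two_smul (ZMod 2) x, show (2 : ZMod 2) = 0 from rfl, zero_smul]

lemma zmod2_add_eq_zero_iff {x y : M} : x + y = 0 ↔ x = y := by
  constructor
  · intro h
    calc x = x + (y + y) := by rw [zmod2_add_self, add_zero]
    _ = (x + y) + y := by rw [add_assoc]
    _ = y := by rw [h, zero_add]
  · rintro rfl; exact zmod2_add_self x

lemma zmod2_cases_s15 (s : ZMod 2) : s = 0 ∨ s = 1 := by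
  have h : ∀ t : ZMod 2, t = 0 ∨ t = 1 := by decide
  exact h s

lemma zmod2_ne_zero {s : ZMod 2} (h : s ≠ 0) : s = 1 := by
  rcases zmod2_cases_s15 s with rfl | rfl
  · exact absurd rfl h
  · rfl

lemma zmod2_cancel (x y : M) : x + (x + y) = y := by
  rw [← add_assoc, zmod2_add_self, zero_add]

lemma coe_span_pair (u v : M) :
    ((Submodule.span (ZMod 2) {u, v} : Submodule (ZMod 2) M) : Set M)
      = {0, u, v, u + v} := by
  ext x
  simp only [SetLike.mem_coe, Submodule.mem_span_pair, Set.mem_insert_iff,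
    Set.mem_singleton_iff]
  constructor
  · rintro ⟨s, t, rfl⟩
    rcases zmod2_cases_s15 s with rfl | rfl <;> rcases zmod2_cases_s15 t with rfl | rfl <;>
      simp <;> tauto
  · rintro (rfl | rfl | rfl | rfl)
    exacts [⟨0, 0, by simp⟩, ⟨1, 0, by simp⟩, ⟨0, 1, by simp⟩, ⟨1, 1, by simp⟩]

lemma finrank_span_pair_eq_two {u v : M} (hu : u ≠ 0) (hv : v ≠ 0) (huv : u ≠ v) :
    Module.finrank (ZMod 2) (Submodule.span (ZMod 2) ({u, v} : Set M)) = 2 := by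
  have hI : LinearIndependent (ZMod 2) ![u, v] := by
    rw [LinearIndependent.pair_iff]
    intro s t hst
    rcases zmod2_cases_s15 s with rfl | rfl <;> rcases zmod2_cases_s15 t with rfl | rfl
    · exact ⟨rfl, rfl⟩
    · rw [zero_smul, one_smul, zero_add] at hst; exact absurd hst hv
    · rw [zero_smul, one_smul, add_zero] at hst; exact absurd hst hu
    · rw [one_smul, one_smul] at hst
      exact absurd (zmod2_add_eq_zero_iff.mp hst) huv
  have hr : Set.range ![u, v] = {u, v} := by
    ext x
    simp [Fin.exists_fin_two, or_comm]
  have := finrank_span_eq_card hI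
  rw [hr] at this
  simpa using this

omit [Module (ZMod 2) M] in
lemma sum_four {a b c d : M} (hab : a ≠ b) (hac : a ≠ c) (had : a ≠ d)
    (hbc : b ≠ c) (hbd : b ≠ d) (hcd : c ≠ d) [DecidableEq M] :
    ∑ x ∈ ({a, b, c, d} : Finset M), x = a + b + c + d := by
  rw [Finset.sum_insert (by simp [hab, hac, had]),
    Finset.sum_insert (by simp [hbc, hbd]), Finset.sum_insert (by simp [hcd]),
    Finset.sum_singleton]
  abel

omit [AddCommGroup M] [Module (ZMod 2) M] in
lemma card_four_finset {a b c d : M} (hab : a ≠ b) (hac : a ≠ c) (had : a ≠ d)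
    (hbc : b ≠ c) (hbd : b ≠ d) (hcd : c ≠ d) [DecidableEq M] :
    ({a, b, c, d} : Finset M).card = 4 := by
  rw [Finset.card_insert_of_notMem (by simp [hab, hac, had]),
    Finset.card_insert_of_notMem (by simp [hbc, hbd]),
    Finset.card_insert_of_notMem (by simp [hcd]), Finset.card_singleton]

omit [AddCommGroup M] [Module (ZMod 2) M] in
lemma card_eq_four' [DecidableEq M] {T : Finset M} (h : T.card = 4) :
    ∃ a b c d : M, a ≠ b ∧ a ≠ c ∧ a ≠ d ∧ b ≠ c ∧ b ≠ d ∧ c ≠ d ∧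
      T = {a, b, c, d} := by
  have hpos : 0 < T.card := by omega
  obtain ⟨a, ha⟩ := Finset.card_pos.mp hpos
  have h3 : (T.erase a).card = 3 := by
    rw [Finset.card_erase_of_mem ha, h]
  obtain ⟨b, c, d, hbc, hbd, hcd, hE⟩ := Finset.card_eq_three.mp h3
  have hab : a ≠ b := fun h' => (Finset.notMem_erase a T) (by rw [hE]; simp [h'])
  have hac : a ≠ c := fun h' => (Finset.notMem_erase a T) (by rw [hE]; simp [h'])
  have had : a ≠ d := fun h' => (Finset.notMem_erase a T) (by rw [hE]; simp [h'])
  refine ⟨a, b, c, d, hab, hac, had, hbc, hbd, hcd, ?_⟩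
  rw [← Finset.insert_erase ha, hE]

/-- Four distinct points summing to zero form an affine plane. -/
lemma plane_of_four_s15 {a b c d : M} [DecidableEq M] (hab : a ≠ b) (hac : a ≠ c)
    (had : a ≠ d) (hbc : b ≠ c) (hbd : b ≠ d) (hcd : c ≠ d)
    (hsum : a + b + c + d = 0) :
    ∃ W : Submodule (ZMod 2) M, Module.finrank (ZMod 2) W = 2 ∧
      (({a, b, c, d} : Finset M) : Set M) = (a + ·) '' (W : Set M) := by
  refine ⟨Submodule.span (ZMod 2) {a + b, a + c}, ?_, ?_⟩
  · refine finrank_span_pair_eq_two ?_ ?_ ?_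
    · intro h; exact hab (zmod2_add_eq_zero_iff.mp h)
    · intro h; exact hac (zmod2_add_eq_zero_iff.mp h)
    · intro h; exact hbc (by simpa using congrArg (a + ·) h)
  · have hd : a + ((a + b) + (a + c)) = d := by
      have h1 : a + ((a + b) + (a + c)) = a + b + c := by
        rw [show (a + b) + (a + c) = a + (a + (b + c)) by abel, zmod2_cancel]
        abel
      rw [h1]
      exact zmod2_add_eq_zero_iff.mp hsum
    rw [coe_span_pair]
    simp only [Set.image_insert_eq, Set.image_singleton, add_zero,
      zmod2_cancel, hd]
    simp [Set.insert_comm, Set.insert_def]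

end Helpers

section Plane

variable {M : Type*} [AddCommGroup M] [Module (ZMod 2) M]
  [FiniteDimensional (ZMod 2) M] [DecidableEq M]

/-- A coset of a 2-dimensional subspace is a 4-element finset summing to zero. -/
lemma finset_of_plane (W : Submodule (ZMod 2) M)
    (hW : Module.finrank (ZMod 2) W = 2) (a : M) :
    ∃ T : Finset M, (T : Set M) = (a + ·) '' (W : Set M) ∧ T.card = 4 ∧
      ∑ x ∈ T, x = 0 := by
  have b : Module.Basis (Fin 2) (ZMod 2) W := Module.finBasisOfFinrankEq (ZMod 2) W hW
  set u : M := (b 0 : M) with hu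
  set v : M := (b 1 : M) with hv
  have hu0 : u ≠ 0 := by
    simpa [hu, Submodule.coe_eq_zero] using b.ne_zero 0
  have hv0 : v ≠ 0 := by
    simpa [hv, Submodule.coe_eq_zero] using b.ne_zero 1
  have huv : u ≠ v := by
    intro h
    have : b 0 = b 1 := Subtype.coe_injective h
    exact (by decide : (0 : Fin 2) ≠ 1) (b.injective this)
  have huv0 : u + v ≠ 0 := fun h => huv (zmod2_add_eq_zero_iff.mp h)
  have huuv : u ≠ u + v := by
    intro h
    apply hv0
    have h2 := congrArg (u + ·) h
    simp only [zmod2_cancel, zmod2_add_self] at h2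
    exact h2.symm
  have hvuv : v ≠ u + v := by
    intro h
    apply hu0
    have h2 := congrArg (· + v) h
    rw [zmod2_add_self, add_assoc, zmod2_add_self, add_zero] at h2
    exact h2.symm
  have key : ∀ w w' : M, a + w = a + w' → w = w' := fun w w' h => by
    have := congrArg (a + ·) h
    simpa [zmod2_cancel] using this
  have hne : ∀ w w' : M, w ≠ w' → a + w ≠ a + w' :=
    fun w w' hww h => hww (key _ _ h)
  have hWset : (W : Set M) = {0, u, v, u + v} := by
    ext x
    constructor
    · intro hx
      have hrep := b.sum_repr ⟨x, hx⟩
      rw [Fin.sum_univ_two] at hrep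
      have hx' : (b.repr ⟨x, hx⟩ 0) • u + (b.repr ⟨x, hx⟩ 1) • v = x := by
        have := congrArg (Subtype.val) hrep
        simpa [hu, hv] using this
      rcases zmod2_cases_s15 (b.repr ⟨x, hx⟩ 0) with h0 | h0 <;>
        rcases zmod2_cases_s15 (b.repr ⟨x, hx⟩ 1) with h1 | h1 <;>
        rw [h0, h1] at hx' <;>
        simp only [zero_smul, one_smul, zero_add, add_zero] at hx' <;>
        rw [← hx'] <;> simp
    · rintro (rfl | rfl | rfl | rfl)
      · exact W.zero_mem
      · exact (b 0).2
      · exact (b 1).2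
      · exact W.add_mem (b 0).2 (b 1).2
  have h0u : (0 : M) ≠ u := fun h => hu0 h.symm
  have h0v : (0 : M) ≠ v := fun h => hv0 h.symm
  have h0uv : (0 : M) ≠ u + v := fun h => huv0 h.symm
  refine ⟨{a + 0, a + u, a + v, a + (u + v)}, ?_, ?_, ?_⟩
  · rw [hWset]
    simp only [Set.image_insert_eq, Set.image_singleton]
    simp
  · exact card_four_finset (hne _ _ h0u) (hne _ _ h0v) (hne _ _ h0uv)
      (hne _ _ huv) (hne _ _ huuv) (hne _ _ hvuv)
  · rw [sum_four (hne _ _ h0u) (hne _ _ h0v) (hne _ _ h0uv)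
      (hne _ _ huv) (hne _ _ huuv) (hne _ _ hvuv)]
    rw [show a + 0 + (a + u) + (a + v) + (a + (u + v)) =
      ((a + a) + (a + a)) + ((u + u) + (v + v)) by abel]
    rw [zmod2_add_self, zmod2_add_self, zmod2_add_self, zmod2_add_self]
    simp

end Plane

section Main

abbrev V5 := Fin 5 → ZMod 2

lemma eight_smul_zero (x : V5) : (8 : ℕ) • x = 0 := by
  funext i
  show (8 : ℕ) • x i = 0
  rw [nsmul_eq_mul, show ((8 : ℕ) : ZMod 2) = 0 by decide, zero_mul]

lemma four_smul_zero (x : V5) : (4 : ℕ) • x = 0 := by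
  funext i
  show (4 : ℕ) • x i = 0
  rw [nsmul_eq_mul, show ((4 : ℕ) : ZMod 2) = 0 by decide, zero_mul]

/-- Main combinatorial step: eight distinct vectors summing to zero contain four
summing to zero. -/
lemma exists_four_s15 (S : Finset V5) (hcard : S.card = 8) (hsum : ∑ x ∈ S, x = 0) :
    ∃ T ⊆ S, T.card = 4 ∧ ∑ x ∈ T, x = 0 := by
  classical
  obtain ⟨s0, hs0⟩ := Finset.card_pos.mp (by omega : 0 < S.card)
  have hinj : Function.Injective (· + s0 : V5 → V5) := fun x y h => by
    have := congrArg (· + s0) h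
    simp only [add_assoc, zmod2_add_self, add_zero] at this
    exact this
  set S' : Finset V5 := S.image (· + s0) with hS'
  have hS'card : S'.card = 8 := by
    rw [hS', Finset.card_image_of_injective _ hinj, hcard]
  have hS'sum : ∑ x ∈ S', x = 0 := by
    rw [hS', Finset.sum_image (fun x _ y _ h => hinj h), Finset.sum_add_distrib,
      hsum, Finset.sum_const, hcard, zero_add, eight_smul_zero]
  have h0S' : (0 : V5) ∈ S' := by
    rw [hS', Finset.mem_image]
    exact ⟨s0, hs0, zmod2_add_self s0⟩
  -- translation back
  have htrans : ∀ T' : Finset V5, T' ⊆ S' → T'.card = 4 → (∑ x ∈ T', x) = 0 →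
      ∃ T ⊆ S, T.card = 4 ∧ ∑ x ∈ T, x = 0 := by
    intro T' hsub hc hs
    refine ⟨T'.image (· + s0), ?_, ?_, ?_⟩
    · intro x hx
      rw [Finset.mem_image] at hx
      obtain ⟨y, hy, rfl⟩ := hx
      have := hsub hy
      rw [hS', Finset.mem_image] at this
      obtain ⟨w, hw, rfl⟩ := this
      rw [add_assoc, zmod2_add_self, add_zero]
      exact hw
    · rw [Finset.card_image_of_injective _ hinj, hc]
    · rw [Finset.sum_image (fun x _ y _ h => hinj h), Finset.sum_add_distrib, hs,
        Finset.sum_const, hc, zero_add, four_smul_zero]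
  set t : Finset V5 := S'.erase 0 with ht
  have htcard : t.card = 7 := by rw [ht, Finset.card_erase_of_mem h0S', hS'card]
  have htc : Fintype.card ↥t = 7 := by rw [Fintype.card_coe, htcard]
  set e : ↥t ≃ Fin 7 := Fintype.equivFinOfCardEq htc with he
  set v : Fin 7 → V5 := fun i => ((e.symm i : ↥t) : V5) with hv
  have hvinj : Function.Injective v := fun i j h =>
    e.symm.injective (Subtype.coe_injective h)
  have hvmem : ∀ i, v i ∈ t := fun i => (e.symm i).2
  have hvne : ∀ i, v i ≠ 0 := fun i => Finset.ne_of_mem_erase (hvmem i)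
  -- the linear map of coefficient vectors
  set L : (Fin 7 → ZMod 2) →ₗ[ZMod 2] V5 :=
    Fintype.linearCombination (ZMod 2) v with hL
  have hLapp : ∀ z, L z = ∑ i, z i • v i := fun z => rfl
  have hker : 2 ≤ Module.finrank (ZMod 2) (LinearMap.ker L) := by
    have h1 := LinearMap.finrank_range_add_finrank_ker L
    have h2 : Module.finrank (ZMod 2) (Fin 7 → ZMod 2) = 7 := by simp
    have h3 : Module.finrank (ZMod 2) (LinearMap.range L) ≤ 5 := by
      refine le_trans (Submodule.finrank_le _) ?_
      simp
    omega
  set K := LinearMap.ker L with hK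
  have bK : Module.Basis (Fin (Module.finrank (ZMod 2) K)) (ZMod 2) K :=
    Module.finBasis (ZMod 2) K
  set x : K := bK ⟨0, by omega⟩ with hx
  set y : K := bK ⟨1, by omega⟩ with hy
  set z1 : Fin 7 → ZMod 2 := (x : Fin 7 → ZMod 2) with hz1
  set z2 : Fin 7 → ZMod 2 := (y : Fin 7 → ZMod 2) with hz2
  set z3 : Fin 7 → ZMod 2 := z1 + z2 with hz3
  have hz10 : z1 ≠ 0 := by
    simpa [hz1, Submodule.coe_eq_zero] using bK.ne_zero ⟨0, by omega⟩
  have hz20 : z2 ≠ 0 := by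
    simpa [hz2, Submodule.coe_eq_zero] using bK.ne_zero ⟨1, by omega⟩
  have hz12 : z1 ≠ z2 := by
    intro h
    have h' : x = y := Subtype.coe_injective h
    have h2 := bK.injective h'
    simp only [Fin.mk.injEq] at h2
    omega
  have hz30 : z3 ≠ 0 := fun h => hz12 (zmod2_add_eq_zero_iff.mp (hz3 ▸ h))
  have hLz1 : L z1 = 0 := x.2
  have hLz2 : L z2 = 0 := y.2
  have hLz3 : L z3 = 0 := by rw [hz3, map_add, hLz1, hLz2, add_zero]
  -- weights
  set wt : (Fin 7 → ZMod 2) → ℕ :=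
    fun z => (Finset.univ.filter (fun i => z i ≠ 0)).card with hwt
  have hwtsum : ∀ z, wt z = ∑ i : Fin 7, if z i ≠ 0 then 1 else 0 := fun z =>
    Finset.card_filter _ _
  have hbound : wt z1 + wt z2 + wt z3 ≤ 14 := by
    have hpt : ∀ i : Fin 7,
        ((if z1 i ≠ 0 then 1 else 0) + (if z2 i ≠ 0 then 1 else 0))
          + (if z3 i ≠ 0 then 1 else 0) ≤ 2 := by
      intro i
      by_cases h1 : z1 i = 0 <;> by_cases h2 : z2 i = 0
      · simp only [h1, h2, ne_eq, not_true_eq_false, if_false]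
        split <;> omega
      · simp only [h1, h2, ne_eq, not_true_eq_false, if_false, not_false_eq_true, if_true]
        split <;> omega
      · simp only [h1, h2, ne_eq, not_true_eq_false, if_false, not_false_eq_true, if_true]
        split <;> omega
      · have hz3i : z3 i = 0 := by
          show z1 i + z2 i = 0
          rw [zmod2_ne_zero h1, zmod2_ne_zero h2]
          decide
        simp [h1, h2, hz3i]
    calc wt z1 + wt z2 + wt z3
        = ∑ i : Fin 7, (((if z1 i ≠ 0 then 1 else 0) + (if z2 i ≠ 0 then 1 else 0))
            + (if z3 i ≠ 0 then 1 else 0)) := by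
          rw [hwtsum, hwtsum, hwtsum, ← Finset.sum_add_distrib, ← Finset.sum_add_distrib]
      _ ≤ ∑ _i : Fin 7, 2 := Finset.sum_le_sum (fun i _ => hpt i)
      _ = 14 := by simp
  -- pick a low-weight kernel vector
  have hmain : ∃ z : Fin 7 → ZMod 2, z ≠ 0 ∧ L z = 0 ∧ wt z ≤ 4 := by
    by_contra hcon
    push_neg at hcon
    have h1 := hcon z1 hz10 hLz1
    have h2 := hcon z2 hz20 hLz2
    have h3 := hcon z3 hz30 hLz3
    omega
  obtain ⟨z, hz0, hLz, hzwt⟩ := hmain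
  set supp : Finset (Fin 7) := Finset.univ.filter (fun i => z i ≠ 0) with hsupp
  have hsuppsum : ∑ i ∈ supp, v i = 0 := by
    have h1 : ∑ i ∈ supp, z i • v i = ∑ i, z i • v i :=
      Finset.sum_filter_of_ne (fun i _ h hz' => h (by rw [hz', zero_smul]))
    have h2 : ∑ i ∈ supp, v i = ∑ i ∈ supp, z i • v i :=
      Finset.sum_congr rfl (fun i hi => by
        rw [hsupp, Finset.mem_filter] at hi
        rw [zmod2_ne_zero hi.2, one_smul])
    rw [h2, h1, ← hLapp, hLz]
  have hsuppne : supp.Nonempty := by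
    rcases Finset.eq_empty_or_nonempty supp with h | h
    · exfalso
      apply hz0
      funext i
      simp only [Pi.zero_apply]
      by_contra hzi
      have hi : i ∈ supp := by rw [hsupp]; simp [hzi]
      rw [h] at hi
      simp at hi
    · exact h
  have h1le : 1 ≤ supp.card := Finset.card_pos.mpr hsuppne
  have hvsub : supp.image v ⊆ S' := fun w hw => by
    rw [Finset.mem_image] at hw
    obtain ⟨i, _, rfl⟩ := hw
    exact Finset.mem_of_mem_erase (hvmem i)
  have hvcard : (supp.image v).card = supp.card :=
    Finset.card_image_of_injective _ hvinj
  have hvsum : ∑ w ∈ supp.image v, w = 0 := by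
    rw [Finset.sum_image (fun a _ b _ h => hvinj h)]
    exact hsuppsum
  have h0img : (0 : V5) ∉ supp.image v := by
    rw [Finset.mem_image]
    rintro ⟨i, _, hi⟩
    exact hvne i hi
  have hwz : wt z = supp.card := rfl
  have hcases : supp.card = 1 ∨ supp.card = 2 ∨ supp.card = 3 ∨ supp.card = 4 := by
    omega
  rcases hcases with h | h | h | h
  · -- weight 1: contradiction
    obtain ⟨i, hi⟩ := Finset.card_eq_one.mp h
    rw [hi, Finset.sum_singleton] at hsuppsum
    exact absurd hsuppsum (hvne i)
  · -- weight 2: contradiction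
    obtain ⟨i, j, hij, hij'⟩ := Finset.card_eq_two.mp h
    rw [hij', Finset.sum_pair hij] at hsuppsum
    exact absurd (hvinj (zmod2_add_eq_zero_iff.mp hsuppsum)) hij
  · -- weight 3: add the zero vector
    refine htrans (insert 0 (supp.image v)) ?_ ?_ ?_
    · intro w hw
      rcases Finset.mem_insert.mp hw with rfl | hw
      · exact h0S'
      · exact hvsub hw
    · rw [Finset.card_insert_of_notMem h0img, hvcard, h]
    · rw [Finset.sum_insert h0img, hvsum, add_zero]
  · -- weight 4
    refine htrans (supp.image v) hvsub (by rw [hvcard, h]) hvsum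

end Main

/-- A set of eight pairwise distinct vectors of 𝔽₂⁵ sums to zero
iff it is the disjoint union of two affine planes (cosets of 2-dimensional
linear subspaces) of 𝔽₂⁵. -/
theorem stmt_15 (S : Finset (Fin 5 → ZMod 2)) (hcard : S.card = 8) :
    (∑ x ∈ S, x) = 0 ↔
    ∃ (W W' : Submodule (ZMod 2) (Fin 5 → ZMod 2)) (a a' : Fin 5 → ZMod 2),
      Module.finrank (ZMod 2) W = 2 ∧ Module.finrank (ZMod 2) W' = 2 ∧
      (S : Set (Fin 5 → ZMod 2)) =
        ((a + ·) '' (W : Set (Fin 5 → ZMod 2))) ∪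
          ((a' + ·) '' (W' : Set (Fin 5 → ZMod 2))) ∧
      Disjoint ((a + ·) '' (W : Set (Fin 5 → ZMod 2)))
        ((a' + ·) '' (W' : Set (Fin 5 → ZMod 2))) := by
  classical
  constructor
  · intro hsum
    obtain ⟨T, hTsub, hT4, hTsum⟩ := exists_four_s15 S hcard hsum
    have hT4' : (S \ T).card = 4 := by
      rw [Finset.card_sdiff_of_subset hTsub, hcard, hT4]
    have hTsum' : ∑ x ∈ S \ T, x = 0 := by
      have h := Finset.sum_sdiff hTsub (f := id)
      simp only [id] at h
      rw [hTsum, hsum, add_zero] at h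
      exact h
    obtain ⟨a, b, c, d, hab, hac, had, hbc, hbd, hcd, hTeq⟩ := card_eq_four' hT4
    obtain ⟨a', b', c', d', hab', hac', had', hbc', hbd', hcd', hTeq'⟩ :=
      card_eq_four' hT4'
    have hsum1 : a + b + c + d = 0 := by
      rw [hTeq, sum_four hab hac had hbc hbd hcd] at hTsum
      exact hTsum
    have hsum2 : a' + b' + c' + d' = 0 := by
      rw [hTeq', sum_four hab' hac' had' hbc' hbd' hcd'] at hTsum'
      exact hTsum'
    obtain ⟨W, hW2, hWset⟩ := plane_of_four_s15 hab hac had hbc hbd hcd hsum1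
    obtain ⟨W', hW2', hWset'⟩ := plane_of_four_s15 hab' hac' had' hbc' hbd' hcd' hsum2
    refine ⟨W, W', a, a', hW2, hW2', ?_, ?_⟩
    · rw [← hWset, ← hWset', ← hTeq, ← hTeq', ← Finset.coe_union,
        Finset.union_sdiff_of_subset hTsub]
    · rw [← hWset, ← hWset', ← hTeq, ← hTeq', Finset.disjoint_coe]
      exact Finset.disjoint_sdiff
  · rintro ⟨W, W', a, a', hW, hW', hunion, hdisj⟩
    obtain ⟨T, hTset, hT4, hTsum⟩ := finset_of_plane W hW a
    obtain ⟨T', hTset', hT4', hTsum'⟩ := finset_of_plane W' hW' a'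
    have hS : S = T ∪ T' := Finset.coe_injective (by
      rw [Finset.coe_union, hTset, hTset', hunion])
    have hdis : Disjoint T T' := Finset.disjoint_coe.1 (by
      rw [hTset, hTset']; exact hdisj)
    rw [hS, Finset.sum_union hdis, hTsum, hTsum', add_zero]
end
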